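/- If G and H are graphs and u, v are distinct vertices of G with N(v) ⊆ N(u), then the inclusion i : G − v ↪ G induces a homotopy equivalence i_H : Hom(G, H) → Hom(G − v, H). -/

import Mathlib

open scoped Topology

/-- A cell of the Lovász `Hom` complex of multihomomorphisms between two graphs,
given by adjacency relations `A` and `B`: a function assigning to each vertex a
nonempty set of vertices such that adjacent vertices get completely adjacent sets. -/
@[ext]
structure HomCell {V W : Type*} (A : V → V → Prop) (B : W → W → Prop) where
  η : V → Set W
  nonempty : ∀ v, (η v).Nonempty
  adj : ∀ ⦃x y⦄, A x y → ∀ a ∈ η x, ∀ b ∈ η y, B a b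

namespace HomCell

variable {U V W : Type*} {A : V → V → Prop} {B : W → W → Prop}

theorem eta_injective : Function.Injective (HomCell.η (A := A) (B := B)) := by
  rintro ⟨f, _, _⟩ ⟨g, _, _⟩ h
  simpa using h

/-- Cells are ordered by pointwise inclusion (the face order of the `Hom` complex). -/
instance : PartialOrder (HomCell A B) := PartialOrder.lift HomCell.η eta_injective

theorem le_def {c d : HomCell A B} : c ≤ d ↔ ∀ v, c.η v ⊆ d.η v := Iff.rfl

noncomputable instance [Finite V] [Finite W] : Fintype (HomCell A B) := by
  classical
  have : Finite (HomCell A B) := Finite.of_injective _ (eta_injective (A := A) (B := B))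
  exact Fintype.ofFinite _

noncomputable instance : DecidableEq (HomCell A B) := Classical.decEq _

/-- Precomposition with a graph homomorphism `φ : (U,A') → (V,A)`: the induced
cellular (monotone) map `Hom(V,W) → Hom(U,W)`; this is the contravariant functoriality
of `Hom(-,H)`. -/
def pull {A' : U → U → Prop} (φ : U → V) (hφ : ∀ ⦃x y⦄, A' x y → A (φ x) (φ y)) :
    HomCell A B →o HomCell A' B where
  toFun c :=
    { η := fun u => c.η (φ u)
      nonempty := fun u => c.nonempty (φ u)
      adj := fun _ _ hxy => c.adj (hφ hxy) }
  monotone' := fun _ _ h u => h (φ u)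

/-- Postcomposition with a graph homomorphism `φ : (V,B) → (W,B')`: the induced
cellular (monotone) map `Hom(U,V) → Hom(U,W)`; this is the covariant functoriality
of `Hom(G,-)`. -/
def push {U₀ V₀ W₀ : Type*} {A₀ : U₀ → U₀ → Prop} {B₀ : V₀ → V₀ → Prop}
    {B₀' : W₀ → W₀ → Prop} (φ : V₀ → W₀)
    (hφ : ∀ ⦃x y⦄, B₀ x y → B₀' (φ x) (φ y)) (c : HomCell A₀ B₀) : HomCell A₀ B₀' where
  η v := φ '' c.η v
  nonempty v := (c.nonempty v).image φ
  adj := by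
    rintro x y hxy a ⟨a', ha', rfl⟩ b ⟨b', hb', rfl⟩
    exact hφ (c.adj hxy a' ha' b' hb')

end HomCell

/-- The geometric realization of the order complex of a preorder `P`:
formal convex combinations supported on finite chains of `P`. -/
def OrderComplex (P : Type*) [Preorder P] : Type _ :=
  { f : P → ℝ // (∀ x, 0 ≤ f x) ∧ HasSum f 1 ∧ IsChain (· ≤ ·) {x | f x ≠ 0} }

instance (P : Type*) [Preorder P] : TopologicalSpace (OrderComplex P) :=
  instTopologicalSpaceSubtype

/-- The topological space underlying the Lovász complex `Hom(G,H)` for graphs given by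
adjacency relations `A`, `B`: the (realization of the) poset of multihomomorphism cells. -/
def HomComplex {V W : Type*} (A : V → V → Prop) (B : W → W → Prop) : Type _ :=
  OrderComplex (HomCell A B)

instance {V W : Type*} (A : V → V → Prop) (B : W → W → Prop) :
    TopologicalSpace (HomComplex A B) := instTopologicalSpaceSubtype

/-- The simplicial map on order complexes induced by a monotone map of posets:
barycentric pushforward of weights. -/
noncomputable def OrderHom.realize {P Q : Type*} [Preorder P] [Preorder Q] [Fintype P]
    [DecidableEq Q] (φ : P →o Q) : C(OrderComplex P, OrderComplex Q) where
  toFun x := by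
    refine ⟨fun q => ∑ p ∈ Finset.univ.filter (fun p => φ p = q), x.1 p, ?_, ?_, ?_⟩
    · intro q
      exact Finset.sum_nonneg fun p _ => x.2.1 p
    · have h1 : ∑ p, x.1 p = 1 := (hasSum_fintype x.1).unique x.2.2.1
      have key : ∀ q ∉ Finset.univ.image φ,
          (∑ p ∈ Finset.univ.filter (fun p => φ p = q), x.1 p) = 0 := by
        intro q hq
        apply Finset.sum_eq_zero
        intro p hp
        simp only [Finset.mem_filter] at hp
        exact absurd (Finset.mem_image.mpr ⟨p, Finset.mem_univ p, hp.2⟩) hq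
      have := hasSum_sum_of_ne_finset_zero (L := SummationFilter.unconditional Q) (s := Finset.univ.image φ)
        (f := fun q => ∑ p ∈ Finset.univ.filter (fun p => φ p = q), x.1 p) key
      have h2 : (∑ q ∈ Finset.univ.image φ,
          ∑ p ∈ Finset.univ.filter (fun p => φ p = q), x.1 p) = ∑ p, x.1 p :=
        Finset.sum_fiberwise_of_maps_to
          (fun p _ => Finset.mem_image_of_mem φ (Finset.mem_univ p)) _
      rwa [h2, h1] at this
    · intro q1 hq1 q2 hq2 hne
      simp only [Set.mem_setOf_eq] at hq1 hq2
      obtain ⟨p1, hp1, hxp1⟩ : ∃ p, φ p = q1 ∧ x.1 p ≠ 0 := by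
        by_contra h
        push_neg at h
        exact hq1 (Finset.sum_eq_zero fun p hp => by
          simp only [Finset.mem_filter] at hp
          exact h p hp.2)
      obtain ⟨p2, hp2, hxp2⟩ : ∃ p, φ p = q2 ∧ x.1 p ≠ 0 := by
        by_contra h
        push_neg at h
        exact hq2 (Finset.sum_eq_zero fun p hp => by
          simp only [Finset.mem_filter] at hp
          exact h p hp.2)
      have hp12 : p1 ≠ p2 := fun h => hne (hp1 ▸ hp2 ▸ h ▸ rfl)
      rcases x.2.2.2 hxp1 hxp2 hp12 with h | h
      · exact Or.inl (hp1 ▸ hp2 ▸ φ.monotone h)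
      · exact Or.inr (hp2 ▸ hp1 ▸ φ.monotone h)
  continuous_toFun := by
    apply Continuous.subtype_mk
    apply continuous_pi
    intro q
    exact continuous_finset_sum _ fun p _ => (continuous_apply p).comp continuous_subtype_val

section Auxiliary

lemma realize_apply {P Q : Type*} [Preorder P] [Preorder Q] [Fintype P] [DecidableEq Q]
    (φ : P →o Q) (x : OrderComplex P) (q : Q) :
    (φ.realize x).1 q = ∑ p ∈ Finset.univ.filter (fun p => φ p = q), x.1 p := rfl

lemma realize_id {P : Type*} [Preorder P] [Fintype P] [DecidableEq P] :
    (OrderHom.id : P →o P).realize = ContinuousMap.id (OrderComplex P) := by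
  ext x
  apply Subtype.ext
  funext q
  rw [realize_apply]
  simp [Finset.filter_eq']

lemma realize_comp {P Q R : Type*} [Preorder P] [Preorder Q] [Preorder R]
    [Fintype P] [Fintype Q] [DecidableEq Q] [DecidableEq R] (φ : P →o Q) (ψ : Q →o R) :
    (ψ.comp φ).realize = ψ.realize.comp (φ.realize) := by
  ext x
  apply Subtype.ext
  funext r
  rw [ContinuousMap.comp_apply, realize_apply, realize_apply]
  simp only [realize_apply, OrderHom.comp_coe, Function.comp_apply]
  rw [← Finset.sum_fiberwise_of_maps_to
    (s := Finset.univ.filter (fun p => ψ (φ p) = r))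
    (t := Finset.univ.filter (fun q => ψ q = r)) (g := φ)
    (fun p hp => by
      simp only [Finset.mem_filter, Finset.mem_univ, true_and] at hp ⊢
      exact hp) (fun p => x.1 p)]
  refine Finset.sum_congr rfl fun q hq => ?_
  simp only [Finset.mem_filter, Finset.mem_univ, true_and] at hq
  refine Finset.sum_congr ?_ fun _ _ => rfl
  ext p
  simp only [Finset.mem_filter, Finset.mem_univ, true_and]
  constructor
  · rintro ⟨-, h⟩; exact h
  · intro h; exact ⟨h ▸ hq, h⟩

variable {P Q : Type*} [Preorder P] [Fintype P]

open Classical in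
/-- Sum of the weights sitting strictly above `p`. -/
noncomputable def aboveSum (x : P → ℝ) (p : P) : ℝ :=
  ∑ q ∈ Finset.univ.filter (fun q => p < q), x q

/-- The part of the weight of `p` that has been pushed to `g p` at time `t`. -/
noncomputable def nuW (x : P → ℝ) (t : ℝ) (p : P) : ℝ :=
  min (x p) (max 0 (t - aboveSum x p))

/-- The part of the weight of `p` still sitting at `f p` at time `t`. -/
noncomputable def muW (x : P → ℝ) (t : ℝ) (p : P) : ℝ := x p - nuW x t p

lemma aboveSum_nonneg {x : P → ℝ} (hx : ∀ p, 0 ≤ x p) (p : P) : 0 ≤ aboveSum x p := by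
  unfold aboveSum
  exact Finset.sum_nonneg fun q _ => hx q

lemma nuW_nonneg {x : P → ℝ} (hx : ∀ p, 0 ≤ x p) (t : ℝ) (p : P) : 0 ≤ nuW x t p :=
  le_min (hx p) (le_max_left 0 _)

lemma nuW_le (x : P → ℝ) (t : ℝ) (p : P) : nuW x t p ≤ x p := min_le_left _ _

lemma muW_nonneg (x : P → ℝ) (t : ℝ) (p : P) : 0 ≤ muW x t p :=
  sub_nonneg.2 (nuW_le x t p)

lemma muW_add_nuW (x : P → ℝ) (t : ℝ) (p : P) : muW x t p + nuW x t p = x p :=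
  sub_add_cancel _ _

lemma nuW_zero {x : P → ℝ} (hx : ∀ p, 0 ≤ x p) (p : P) : nuW x 0 p = 0 := by
  unfold nuW
  rw [max_eq_left (by linarith [aboveSum_nonneg hx p])]
  exact min_eq_right (hx p)

open Classical in
lemma nuW_one {x : P → ℝ} (hx : ∀ p, 0 ≤ x p) (hsum : ∑ p, x p = 1) (p : P) :
    nuW x 1 p = x p := by
  unfold nuW
  apply min_eq_left
  have hmem : p ∉ (Finset.univ.filter (fun q => p < q) :
      Finset P) := by simp
  have h1 : x p + aboveSum x p ≤ 1 := by
    unfold aboveSum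
    rw [← hsum, ← Finset.sum_insert hmem]
    exact Finset.sum_le_sum_of_subset_of_nonneg (Finset.subset_univ _)
      (fun q _ _ => hx q)
  exact le_max_of_le_right (by linarith)

open Classical in
lemma nuW_eq_of_lt {x : P → ℝ} (hx : ∀ p, 0 ≤ x p) {t : ℝ} {p' p : P} (h : p' < p)
    (hpos : 0 < nuW x t p') : nuW x t p = x p := by
  have h1 : 0 < t - aboveSum x p' := by
    have := (lt_min_iff.1 hpos).2
    rcases lt_max_iff.1 this with h' | h'
    · exact absurd h' (lt_irrefl 0)
    · exact h'
  have hmem : p ∉ (Finset.univ.filter (fun q => p < q) : Finset P) := by simp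
  have h2 : x p + aboveSum x p ≤ aboveSum x p' := by
    unfold aboveSum
    rw [← Finset.sum_insert hmem]
    refine Finset.sum_le_sum_of_subset_of_nonneg ?_ (fun q _ _ => hx q)
    intro q hq
    simp only [Finset.mem_insert, Finset.mem_filter, Finset.mem_univ, true_and] at hq ⊢
    rcases hq with rfl | hq
    · exact h
    · exact h.trans hq
  apply min_eq_left
  refine le_trans ?_ (le_max_right 0 _)
  linarith

/-- The weight function of the prism homotopy between realized maps `f` and `g`. -/
noncomputable def prism [DecidableEq Q] (f g : P → Q) (x : P → ℝ) (t : ℝ) (q : Q) : ℝ :=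
  (∑ p ∈ Finset.univ.filter (fun p => f p = q), muW x t p)
  + ∑ p ∈ Finset.univ.filter (fun p => g p = q), nuW x t p

lemma prism_nonneg [DecidableEq Q] (f g : P → Q) {x : P → ℝ} (hx : ∀ p, 0 ≤ x p) (t : ℝ) (q : Q) :
    0 ≤ prism f g x t q :=
  add_nonneg (Finset.sum_nonneg fun p _ => muW_nonneg x t p)
    (Finset.sum_nonneg fun p _ => nuW_nonneg hx t p)

lemma prism_sum [Fintype Q] [DecidableEq Q] (f g : P → Q) {x : P → ℝ} (hsum : ∑ p, x p = 1) (t : ℝ) :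
    ∑ q, prism f g x t q = 1 := by
  unfold prism
  rw [Finset.sum_add_distrib,
    Finset.sum_fiberwise_of_maps_to (fun p _ => Finset.mem_univ (f p)) (muW x t),
    Finset.sum_fiberwise_of_maps_to (fun p _ => Finset.mem_univ (g p)) (nuW x t),
    ← Finset.sum_add_distrib]
  simp only [muW_add_nuW]
  exact hsum

lemma prism_support [DecidableEq Q] {f g : P → Q} {x : P → ℝ} {t : ℝ} {q : Q}
    (h : prism f g x t q ≠ 0) :
    (∃ p, f p = q ∧ muW x t p ≠ 0) ∨ (∃ p, g p = q ∧ nuW x t p ≠ 0) := by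
  by_contra hc
  push_neg at hc
  apply h
  unfold prism
  rw [Finset.sum_eq_zero, Finset.sum_eq_zero, add_zero]
  · intro p hp
    simp only [Finset.mem_filter, Finset.mem_univ, true_and] at hp
    exact hc.2 p hp
  · intro p hp
    simp only [Finset.mem_filter, Finset.mem_univ, true_and] at hp
    exact hc.1 p hp

lemma ne_zero_of_muW_ne_zero {x : P → ℝ} (hx : ∀ p, 0 ≤ x p) {t : ℝ} {p : P}
    (h : muW x t p ≠ 0) : x p ≠ 0 := by
  intro h0
  apply h
  unfold muW
  have h1 : nuW x t p = 0 :=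
    le_antisymm (h0 ▸ nuW_le x t p) (nuW_nonneg hx t p)
  rw [h0, h1, sub_zero]

lemma ne_zero_of_nuW_ne_zero {x : P → ℝ} (hx : ∀ p, 0 ≤ x p) {t : ℝ} {p : P}
    (h : nuW x t p ≠ 0) : x p ≠ 0 := by
  intro h0
  exact h (le_antisymm (h0 ▸ nuW_le x t p) (nuW_nonneg hx t p))

lemma prism_cross {P₁ Q₁ : Type*} [PartialOrder P₁] [PartialOrder Q₁] [Fintype P₁]
    {x : P₁ → ℝ} (hx : ∀ p, 0 ≤ x p)
    (hchain : IsChain (· ≤ ·) {p | x p ≠ 0}) (f g : P₁ →o Q₁)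
    (hfg : ∀ p, f p ≤ g p) {t : ℝ} {p1 p2 : P₁}
    (h1 : muW x t p1 ≠ 0) (h2 : nuW x t p2 ≠ 0) : f p1 ≤ g p2 ∨ g p2 ≤ f p1 := by
  have hx1 : x p1 ≠ 0 := ne_zero_of_muW_ne_zero hx h1
  have hx2 : x p2 ≠ 0 := ne_zero_of_nuW_ne_zero hx h2
  rcases eq_or_ne p1 p2 with rfl | hne
  · exact Or.inl (hfg p1)
  · rcases hchain hx1 hx2 hne with h | h
    · exact Or.inl ((f.monotone h).trans (hfg p2))
    · have hlt : p2 < p1 := lt_of_le_of_ne h hne.symm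
      have hpos : 0 < nuW x t p2 := lt_of_le_of_ne (nuW_nonneg hx t p2) (Ne.symm h2)
      exact absurd (nuW_eq_of_lt hx hlt hpos) (by
        intro he
        apply h1
        unfold muW
        rw [he, sub_self])

open unitInterval in
/-- If `f ≤ g` pointwise, the realized maps on order complexes are homotopic,
via the standard prism (cylinder) homotopy. -/
noncomputable def homotopyOfLE {P₁ Q₁ : Type*} [PartialOrder P₁] [PartialOrder Q₁]
    [Fintype P₁] [Fintype Q₁] [DecidableEq Q₁] (f g : P₁ →o Q₁) (hfg : ∀ p, f p ≤ g p) :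
    ContinuousMap.Homotopy f.realize g.realize where
  toFun s := by
    refine ⟨prism f g s.2.1 s.1.1, fun q => prism_nonneg _ _ s.2.2.1 _ q, ?_, ?_⟩
    · have hsum : ∑ p, s.2.1 p = 1 := (hasSum_fintype s.2.1).unique s.2.2.2.1
      have := prism_sum (x := s.2.1) (⇑f) (⇑g) hsum s.1.1
      have h2 := hasSum_fintype (prism (⇑f) (⇑g) s.2.1 s.1.1)
      rwa [this] at h2
    · intro q1 hq1 q2 hq2 hne
      simp only [Set.mem_setOf_eq] at hq1 hq2
      have hx := s.2.2.1
      have hchain := s.2.2.2.2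
      rcases prism_support hq1 with ⟨p1, hp1, hm1⟩ | ⟨p1, hp1, hm1⟩ <;>
        rcases prism_support hq2 with ⟨p2, hp2, hm2⟩ | ⟨p2, hp2, hm2⟩ <;>
          subst hp1 <;> subst hp2
      · have hx1 : s.2.1 p1 ≠ 0 := ne_zero_of_muW_ne_zero hx hm1
        have hx2 : s.2.1 p2 ≠ 0 := ne_zero_of_muW_ne_zero hx hm2
        have hpne : p1 ≠ p2 := fun h => hne (congrArg f h)
        rcases hchain hx1 hx2 hpne with h | h
        · exact Or.inl (f.monotone h)
        · exact Or.inr (f.monotone h)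
      · exact prism_cross hx hchain f g hfg hm1 hm2
      · rcases prism_cross hx hchain f g hfg hm2 hm1 with h | h
        · exact Or.inr h
        · exact Or.inl h
      · have hx1 : s.2.1 p1 ≠ 0 := ne_zero_of_nuW_ne_zero hx hm1
        have hx2 : s.2.1 p2 ≠ 0 := ne_zero_of_nuW_ne_zero hx hm2
        have hpne : p1 ≠ p2 := fun h => hne (congrArg g h)
        rcases hchain hx1 hx2 hpne with h | h
        · exact Or.inl (g.monotone h)
        · exact Or.inr (g.monotone h)
  continuous_toFun := by
    apply Continuous.subtype_mk
    apply continuous_pi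
    intro q
    have hx : ∀ p : P₁, Continuous fun s : unitInterval × OrderComplex P₁ => s.2.1 p :=
      fun p => (continuous_apply p).comp (continuous_subtype_val.comp continuous_snd)
    have ht : Continuous fun s : unitInterval × OrderComplex P₁ => (s.1 : ℝ) :=
      continuous_subtype_val.comp continuous_fst
    have habove : ∀ p : P₁,
        Continuous fun s : unitInterval × OrderComplex P₁ => aboveSum s.2.1 p := by
      intro p
      unfold aboveSum
      exact continuous_finset_sum _ fun q _ => hx q
    have hnu : ∀ p : P₁,
        Continuous fun s : unitInterval × OrderComplex P₁ => nuW s.2.1 s.1.1 p := by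
      intro p
      unfold nuW
      exact (hx p).min (continuous_const.max (ht.sub (habove p)))
    have hmu : ∀ p : P₁,
        Continuous fun s : unitInterval × OrderComplex P₁ => muW s.2.1 s.1.1 p :=
      fun p => (hx p).sub (hnu p)
    unfold prism
    exact (continuous_finset_sum _ fun p _ => hmu p).add
      (continuous_finset_sum _ fun p _ => hnu p)
  map_zero_left x := by
    apply Subtype.ext
    funext q
    show prism (⇑f) (⇑g) x.1 ((0 : unitInterval) : ℝ) q = (f.realize x).1 q
    rw [realize_apply]
    unfold prism
    rw [Set.Icc.coe_zero]
    rw [Finset.sum_eq_zero (fun p _ => nuW_zero x.2.1 p), add_zero]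
    refine Finset.sum_congr rfl fun p _ => ?_
    unfold muW
    rw [nuW_zero x.2.1 p, sub_zero]
  map_one_left x := by
    apply Subtype.ext
    funext q
    show prism (⇑f) (⇑g) x.1 ((1 : unitInterval) : ℝ) q = (g.realize x).1 q
    rw [realize_apply]
    unfold prism
    rw [Set.Icc.coe_one]
    have hsum : ∑ p, x.1 p = 1 := (hasSum_fintype x.1).unique x.2.2.1
    rw [Finset.sum_eq_zero (fun p _ => by
      unfold muW
      rw [nuW_one x.2.1 hsum p, sub_self]), zero_add]
    exact Finset.sum_congr rfl fun p _ => nuW_one x.2.1 hsum p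

end Auxiliary

/-- **The folding lemma** (Babson–Kozlov): if `u ≠ v` are vertices of `G` with
`N(v) ⊆ N(u)`, then the inclusion `G - v ↪ G` induces a homotopy equivalence
`Hom(G,H) → Hom(G - v, H)`. -/
theorem fold_homotopyEquiv {V W : Type*} [Fintype V] [Fintype W] (G : SimpleGraph V)
    (H : SimpleGraph W) (u v : V) (huv : u ≠ v) (hN : ∀ w, G.Adj v w → G.Adj u w) :
    ∃ e : ContinuousMap.HomotopyEquiv (HomComplex G.Adj H.Adj)
        (HomComplex (G.induce {x | x ≠ v}).Adj H.Adj),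
      ⇑e.toFun = ⇑(HomCell.pull (B := H.Adj) (Subtype.val : {x | x ≠ v} → V)
        (fun _ _ h => h)).realize := by
  haveI : DecidableEq V := Classical.decEq V
  -- the induced map `Hom(G,H) → Hom(G-v,H)`
  set α : HomCell G.Adj H.Adj →o HomCell (G.induce {x | x ≠ v}).Adj H.Adj :=
    HomCell.pull (B := H.Adj) (Subtype.val : {x | x ≠ v} → V) (fun _ _ h => h) with hα
  -- `u` is not adjacent to itself, hence `v` is not adjacent to `u`
  have hvu : ¬ G.Adj v u := fun h => G.loopless.irrefl u (hN u h)
  -- the section induced by the fold `G → G - v`, `v ↦ u`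
  have husv : u ∈ {x | x ≠ v} := huv
  set β : HomCell (G.induce {x | x ≠ v}).Adj H.Adj →o HomCell G.Adj H.Adj :=
    { toFun := fun c =>
        { η := fun x => if hx : x = v then c.η ⟨u, husv⟩ else c.η ⟨x, hx⟩
          nonempty := fun x => by
            by_cases hx : x = v
            · rw [dif_pos hx]; exact c.nonempty _
            · rw [dif_neg hx]; exact c.nonempty _
          adj := by
            intro x y hxy a ha b hb
            by_cases hx : x = v <;> by_cases hy : y = v
            · subst hx; subst hy; exact absurd hxy (G.loopless.irrefl _)
            · rw [dif_pos hx] at ha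
              rw [dif_neg hy] at hb
              exact c.adj (show (G.induce {x | x ≠ v}).Adj ⟨u, husv⟩ ⟨y, hy⟩ from
                hN y (hx ▸ hxy)) a ha b hb
            · rw [dif_neg hx] at ha
              rw [dif_pos hy] at hb
              exact c.adj (show (G.induce {x | x ≠ v}).Adj ⟨x, hx⟩ ⟨u, husv⟩ from
                (hN x (G.symm.symm _ _ (hy ▸ hxy))).symm) a ha b hb
            · rw [dif_neg hx] at ha
              rw [dif_neg hy] at hb
              exact c.adj (show (G.induce {x | x ≠ v}).Adj ⟨x, hx⟩ ⟨y, hy⟩ from hxy)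
                a ha b hb }
      monotone' := by
        intro c d h x
        by_cases hx : x = v
        · simp only [dif_pos hx]; exact h _
        · simp only [dif_neg hx]; exact h _ } with hβ
  -- the closure-type upper bound for both `id` and `β ∘ α`
  set γ : HomCell G.Adj H.Adj →o HomCell G.Adj H.Adj :=
    { toFun := fun c =>
        { η := fun x => if x = v then c.η v ∪ c.η u else c.η x
          nonempty := fun x => by
            by_cases hx : x = v
            · rw [if_pos hx]
              obtain ⟨a, ha⟩ := c.nonempty v
              exact ⟨a, Or.inl ha⟩
            · rw [if_neg hx]; exact c.nonempty x
          adj := by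
            intro x y hxy a ha b hb
            by_cases hx : x = v <;> by_cases hy : y = v
            · subst hx; subst hy; exact absurd hxy (G.loopless.irrefl _)
            · rw [if_pos hx] at ha
              rw [if_neg hy] at hb
              rcases ha with ha | ha
              · exact c.adj (hx ▸ hxy) a ha b hb
              · exact c.adj (hN y (hx ▸ hxy)) a ha b hb
            · rw [if_neg hx] at ha
              rw [if_pos hy] at hb
              rcases hb with hb | hb
              · exact c.adj (hy ▸ hxy) a ha b hb
              · exact c.adj (G.symm.symm _ _ (hN x (G.symm.symm _ _ (hy ▸ hxy)))) a ha b hb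
            · rw [if_neg hx] at ha
              rw [if_neg hy] at hb
              exact c.adj hxy a ha b hb }
      monotone' := by
        intro c d h x
        by_cases hx : x = v
        · simp only [if_pos hx]
          exact Set.union_subset_union (h v) (h u)
        · simp only [if_neg hx]; exact h x } with hγ
  have hαβ : α.comp β = OrderHom.id := by
    apply OrderHom.ext
    funext c
    apply HomCell.ext
    funext x
    show (β c).η x.val = c.η x
    have hx : (x : V) ≠ v := x.prop
    show (if hx : (x : V) = v then c.η ⟨u, husv⟩ else c.η ⟨x, hx⟩) = c.η x
    rw [dif_neg hx]
  have hle1 : ∀ c, OrderHom.id c ≤ γ c := by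
    intro c x
    by_cases hx : x = v
    · subst hx
      show c.η x ⊆ if x = x then c.η x ∪ c.η u else c.η x
      rw [if_pos rfl]
      exact Set.subset_union_left
    · show c.η x ⊆ if x = v then c.η v ∪ c.η u else c.η x
      rw [if_neg hx]
  have hle2 : ∀ c, (β.comp α) c ≤ γ c := by
    intro c x
    by_cases hx : x = v
    · subst hx
      show (if hx : x = x then c.η u else c.η x) ⊆ if x = x then c.η x ∪ c.η u else c.η x
      rw [dif_pos rfl, if_pos rfl]
      exact Set.subset_union_right
    · show (if hx' : x = v then c.η u else c.η x) ⊆ if x = v then c.η v ∪ c.η u else c.η x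
      rw [dif_neg hx, if_neg hx]
  have H1 := homotopyOfLE (β.comp α) γ hle2
  have H2 := homotopyOfLE OrderHom.id γ hle1
  have left_inv : (β.realize.comp α.realize).Homotopic (ContinuousMap.id _) := by
    rw [← realize_comp]
    have h3 : ((β.comp α).realize).Homotopic
        ((OrderHom.id : HomCell G.Adj H.Adj →o HomCell G.Adj H.Adj).realize) :=
      ContinuousMap.Homotopic.trans ⟨H1⟩ (ContinuousMap.Homotopic.symm ⟨H2⟩)
    rwa [realize_id] at h3
  have right_inv : (α.realize.comp β.realize).Homotopic (ContinuousMap.id _) := by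
    rw [← realize_comp, hαβ, realize_id]
  exact ⟨⟨α.realize, β.realize, left_inv, right_inv⟩, rfl⟩
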